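/- Let H be a real Hilbert space, V ⊆ H a closed subspace, e ∈ H, and φ : H → ℝ a bounded linear functional. Suppose w ∈ V satisfies ⟨w, q⟩ = φ(q) for all q ∈ V, and p ∈ V satisfies ⟨p, q⟩ = ⟨e, q⟩ + φ(q) for all q ∈ V. Then (1/√2) ‖p‖ ≤ √(‖e‖² + ‖w‖²). -/
import Mathlib

open RealInnerProductSpace

/-- Abstract efficiency estimate for the least-squares adjoint: if `w ∈ V` represents
the functional `φ` on the closed subspace `V` and `p ∈ V` satisfies
`⟨p, q⟩ = ⟨e, q⟩ + φ(q)` for all `q ∈ V`, then `(1/√2) ‖p‖ ≤ √(‖e‖² + ‖w‖²)`. -/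
theorem abstract_efficiency_estimate
    {H : Type*} [NormedAddCommGroup H] [InnerProductSpace ℝ H]
    (V : Submodule ℝ H) (hV : IsClosed (V : Set H))
    (e : H) (φ : H →L[ℝ] ℝ)
    (w : H) (hwV : w ∈ V) (hw : ∀ q ∈ V, ⟪w, q⟫ = φ q)
    (p : H) (hpV : p ∈ V) (hp : ∀ q ∈ V, ⟪p, q⟫ = ⟪e, q⟫ + φ q) :
    (1 / Real.sqrt 2) * ‖p‖ ≤ Real.sqrt (‖e‖ ^ 2 + ‖w‖ ^ 2) := by
  have hpp : ⟪p, p⟫ = ⟪e, p⟫ + ⟪w, p⟫ := by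
    rw [hp p hpV, hw p hpV]
  have h1 : ‖p‖ ^ 2 ≤ (‖e‖ + ‖w‖) * ‖p‖ := by
    have he := real_inner_le_norm e p
    have hwn := real_inner_le_norm w p
    have : ⟪p, p⟫ = ‖p‖ ^ 2 := real_inner_self_eq_norm_sq p
    nlinarith
  have h2 : ‖p‖ ≤ ‖e‖ + ‖w‖ := by
    rcases eq_or_lt_of_le (norm_nonneg p) with h | h
    · nlinarith [norm_nonneg e, norm_nonneg w]
    · nlinarith
  have h3 : (1 / Real.sqrt 2) * ‖p‖ ≤ (1 / Real.sqrt 2) * (‖e‖ + ‖w‖) := by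
    have hpos : (0:ℝ) ≤ 1 / Real.sqrt 2 := by positivity
    exact mul_le_mul_of_nonneg_left h2 hpos
  refine h3.trans ?_
  rw [div_mul_eq_mul_div, one_mul, div_le_iff₀ (by positivity)]
  have key : ‖e‖ + ‖w‖ ≤ Real.sqrt (2 * (‖e‖ ^ 2 + ‖w‖ ^ 2)) := by
    rw [show ‖e‖ + ‖w‖ = Real.sqrt ((‖e‖ + ‖w‖) ^ 2) from
      (Real.sqrt_sq (by positivity)).symm]
    apply Real.sqrt_le_sqrt
    nlinarith [sq_nonneg (‖e‖ - ‖w‖)]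
  calc ‖e‖ + ‖w‖ ≤ Real.sqrt (2 * (‖e‖ ^ 2 + ‖w‖ ^ 2)) := key
    _ = Real.sqrt (‖e‖ ^ 2 + ‖w‖ ^ 2) * Real.sqrt 2 := by
        rw [Real.sqrt_mul (by norm_num), mul_comm]
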